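/- Let x_1, ..., x_n be n ≥ 3 real numbers with mean x̄ = (1/n)∑x_i. Then for any distinct indices j, k ∈ {1,...,n}, ∑_{i=1}^n x_i² ≥ n·x̄² + (1/2)(x_j − x_k)² + (2n/(n−2))·(x̄ − (x_j + x_k)/2)². -/
import Mathlib

open Finset

theorem stmt0 (n : ℕ) (hn : 3 ≤ n) (x : Fin n → ℝ) (j k : Fin n) (hjk : j ≠ k) :
    ∑ i, (x i) ^ 2 ≥
      (n : ℝ) * ((∑ i, x i) / n) ^ 2 + (1 / 2) * (x j - x k) ^ 2
        + (2 * n / ((n : ℝ) - 2)) * ((∑ i, x i) / n - (x j + x k) / 2) ^ 2 := by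
  have hm3 : (3 : ℝ) ≤ (n : ℝ) := by exact_mod_cast hn
  have hm0 : (0 : ℝ) < (n : ℝ) := by linarith
  have hm2 : (0 : ℝ) < (n : ℝ) - 2 := by linarith
  set s : Finset (Fin n) := univ \ {j, k} with hs
  have hsub : ({j, k} : Finset (Fin n)) ⊆ univ := subset_univ _
  have hcard : (#s : ℝ) = (n : ℝ) - 2 := by
    have : #s = n - 2 := by
      rw [hs, card_sdiff_of_subset hsub, card_univ, Fintype.card_fin, card_pair hjk]
    rw [this]
    have : (2 : ℕ) ≤ n := by omega
    push_cast [Nat.cast_sub this]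
    ring
  have hsum : ∑ i, x i = (∑ i ∈ s, x i) + (x j + x k) := by
    rw [hs, sum_sdiff_eq_sub hsub, sum_pair hjk]; ring
  have hsumsq : ∑ i, (x i) ^ 2 = (∑ i ∈ s, (x i) ^ 2) + ((x j) ^ 2 + (x k) ^ 2) := by
    rw [hs, sum_sdiff_eq_sub hsub, sum_pair hjk]; ring
  have hcs : (∑ i ∈ s, x i) ^ 2 ≤ ((n : ℝ) - 2) * ∑ i ∈ s, (x i) ^ 2 := by
    have := sq_sum_le_card_mul_sum_sq (s := s) (f := x)
    calc (∑ i ∈ s, x i) ^ 2 ≤ (#s : ℝ) * ∑ i ∈ s, (x i) ^ 2 := by exact_mod_cast this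
      _ = ((n : ℝ) - 2) * ∑ i ∈ s, (x i) ^ 2 := by rw [hcard]
  set T := ∑ i ∈ s, x i
  set Q := ∑ i ∈ s, (x i) ^ 2
  have hQ : T ^ 2 / ((n : ℝ) - 2) ≤ Q := by
    rw [div_le_iff₀ hm2]; linarith [hcs]
  have key : (x j) ^ 2 + (x k) ^ 2 + T ^ 2 / ((n : ℝ) - 2) =
      (n : ℝ) * ((∑ i, x i) / n) ^ 2 + (1 / 2) * (x j - x k) ^ 2
        + (2 * n / ((n : ℝ) - 2)) * ((∑ i, x i) / n - (x j + x k) / 2) ^ 2 := by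
    rw [hsum]
    field_simp
    ring
  rw [hsumsq, ← key]
  linarith
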